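/- arXiv:1610.09310 — 4 statements merged into one kernel-verified Lean document; each statement's English description precedes it below -/
import Mathlib

section
/- With the hexagonal lattice random walk of the previous setting, Var(Xₙ) = σ₁² n + θ₃ iₙ for all n ∈ ℕ, where iₙ = (1-(-1)ⁿ)/2, σ₁² = (9a²/8)[(q₀₁+q₀₂) - (q₀₁+q₀₂)² + (q₁₁+q₁₂) - (q₁₁+q₁₂)²], and θ₃ = (9a²/8)[(q₀₁+q₀₂) - (q₀₁+q₀₂)² - (q₁₁+q₁₂) + (q₁₁+q₁₂)²]. -/
open MeasureTheory ProbabilityTheory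

lemma integral_three_point {Ω : Type*} [MeasurableSpace Ω] (μ : Measure Ω)
    [IsProbabilityMeasure μ]
    (Z : Ω → ℝ) (hZ : Measurable Z) (c₀ c₁ c₂ x₀ x₁ x₂ : ℝ)
    (h₀ : 0 ≤ c₀) (h₁ : 0 ≤ c₁) (h₂ : 0 ≤ c₂)
    (hlaw : μ.map Z = ENNReal.ofReal c₀ • Measure.dirac x₀
      + ENNReal.ofReal c₁ • Measure.dirac x₁ + ENNReal.ofReal c₂ • Measure.dirac x₂)
    (g : ℝ → ℝ) (hg : Measurable g) :
    ∫ ω, g (Z ω) ∂μ = c₀ * g x₀ + c₁ * g x₁ + c₂ * g x₂ := by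
  have hint : ∀ x : ℝ, Integrable g (Measure.dirac x) := fun x =>
    ⟨hg.aestronglyMeasurable, by simp [HasFiniteIntegral, lintegral_dirac]⟩
  have hint' : ∀ (c : ℝ) (x : ℝ), Integrable g (ENNReal.ofReal c • Measure.dirac x) :=
    fun c x => (hint x).smul_measure ENNReal.ofReal_ne_top
  rw [← integral_map hZ.aemeasurable hg.aestronglyMeasurable, hlaw,
    integral_add_measure (((hint' _ _).add_measure (hint' _ _))) (hint' _ _),
    integral_add_measure (hint' _ _) (hint' _ _),
    integral_smul_measure, integral_smul_measure, integral_smul_measure,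
    integral_dirac, integral_dirac, integral_dirac,
    ENNReal.toReal_ofReal h₀, ENNReal.toReal_ofReal h₁, ENNReal.toReal_ofReal h₂]
  simp [smul_eq_mul]

lemma memℒp_three_point {Ω : Type*} [MeasurableSpace Ω] (μ : Measure Ω)
    [IsProbabilityMeasure μ]
    (Z : Ω → ℝ) (hZ : Measurable Z) (c₀ c₁ c₂ x₀ x₁ x₂ : ℝ)
    (hlaw : μ.map Z = ENNReal.ofReal c₀ • Measure.dirac x₀
      + ENNReal.ofReal c₁ • Measure.dirac x₁ + ENNReal.ofReal c₂ • Measure.dirac x₂) :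
    MemLp Z 2 μ := by
  have hS : MeasurableSet ({x₀, x₁, x₂} : Set ℝ) :=
    ((measurableSet_singleton x₂).insert x₁).insert x₀
  have h0 : μ.map Z ({x₀, x₁, x₂}ᶜ : Set ℝ) = 0 := by
    rw [hlaw]
    simp [Measure.dirac_apply, Set.indicator_of_notMem]
  rw [Measure.map_apply hZ hS.compl] at h0
  have hae : ∀ᵐ ω ∂μ, Z ω ∈ ({x₀, x₁, x₂} : Set ℝ) := by
    rw [ae_iff]
    convert h0 using 2
    rfl
  refine MemLp.of_bound hZ.aestronglyMeasurable (max |x₀| (max |x₁| |x₂|)) ?_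
  filter_upwards [hae] with ω hω
  rcases hω with h | h | h <;> rw [Real.norm_eq_abs, h]
  · exact le_max_left _ _
  · exact le_trans (le_max_left _ _) (le_max_right _ _)
  · exact le_trans (le_max_right _ _) (le_max_right _ _)

lemma variance_three_point {Ω : Type*} [MeasurableSpace Ω] (μ : Measure Ω)
    [IsProbabilityMeasure μ]
    (Z : Ω → ℝ) (hZ : Measurable Z) (c₀ c₁ c₂ x₀ x₁ x₂ : ℝ)
    (h₀ : 0 ≤ c₀) (h₁ : 0 ≤ c₁) (h₂ : 0 ≤ c₂)
    (hlaw : μ.map Z = ENNReal.ofReal c₀ • Measure.dirac x₀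
      + ENNReal.ofReal c₁ • Measure.dirac x₁ + ENNReal.ofReal c₂ • Measure.dirac x₂) :
    variance Z μ = (c₀ * x₀ ^ 2 + c₁ * x₁ ^ 2 + c₂ * x₂ ^ 2)
      - (c₀ * x₀ + c₁ * x₁ + c₂ * x₂) ^ 2 := by
  rw [variance_eq_sub (memℒp_three_point μ Z hZ c₀ c₁ c₂ x₀ x₁ x₂ hlaw)]
  have h1 : ∫ ω, Z ω ∂μ = c₀ * x₀ + c₁ * x₁ + c₂ * x₂ := by
    simpa using integral_three_point μ Z hZ c₀ c₁ c₂ x₀ x₁ x₂ h₀ h₁ h₂ hlaw id measurable_id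
  have h2 : ∫ ω, (Z ω) ^ 2 ∂μ = c₀ * x₀ ^ 2 + c₁ * x₁ ^ 2 + c₂ * x₂ ^ 2 := by
    simpa using integral_three_point μ Z hZ c₀ c₁ c₂ x₀ x₁ x₂ h₀ h₁ h₂ hlaw (fun x => x ^ 2)
      (measurable_id.pow_const 2)
  have h3 : (fun ω => (Z ^ 2) ω) = fun ω => (Z ω) ^ 2 := by ext ω; simp
  simp only [Pi.pow_apply]
  rw [h2, h1]

lemma sum_parity (A B : ℝ) (n : ℕ) :
    ∑ k ∈ Finset.range n, (if Even k then A else B)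
      = (A + B) / 2 * n + (A - B) / 2 * ((1 - (-1 : ℝ) ^ n) / 2) := by
  induction n with
  | zero => simp
  | succ n ih =>
    rw [Finset.sum_range_succ, ih, pow_succ]
    rcases Nat.even_or_odd n with hn | hn
    · rw [if_pos hn, hn.neg_one_pow]
      push_cast
      ring
    · rw [if_neg (Nat.not_even_iff_odd.mpr hn), hn.neg_one_pow]
      push_cast
      ring

theorem stmt_12 {Ω : Type*} [MeasurableSpace Ω] (μ : Measure Ω) [IsProbabilityMeasure μ]
    (a : ℝ) (ha : 0 < a)
    (q₀₀ q₀₁ q₀₂ q₁₀ q₁₁ q₁₂ : ℝ)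
    (hq₀₀ : 0 ≤ q₀₀) (hq₀₁ : 0 ≤ q₀₁) (hq₀₂ : 0 ≤ q₀₂)
    (hq₁₀ : 0 ≤ q₁₀) (hq₁₁ : 0 ≤ q₁₁) (hq₁₂ : 0 ≤ q₁₂)
    (hsum₀ : q₀₀ + q₀₁ + q₀₂ = 1) (hsum₁ : q₁₀ + q₁₁ + q₁₂ = 1)
    (X Y : ℕ → Ω → ℝ)
    (hXm : ∀ k, Measurable (X k)) (hYm : ∀ k, Measurable (Y k))
    (hlaw₀ : ∀ k, Even k → μ.map (fun ω => (X k ω, Y k ω)) =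
        ENNReal.ofReal q₀₀ • Measure.dirac ((a, 0) : ℝ × ℝ)
      + ENNReal.ofReal q₀₁ • Measure.dirac ((-a / 2, a * Real.sqrt 3 / 2) : ℝ × ℝ)
      + ENNReal.ofReal q₀₂ • Measure.dirac ((-a / 2, -(a * Real.sqrt 3) / 2) : ℝ × ℝ))
    (hlaw₁ : ∀ k, Odd k → μ.map (fun ω => (X k ω, Y k ω)) =
        ENNReal.ofReal q₁₀ • Measure.dirac ((-a, 0) : ℝ × ℝ)
      + ENNReal.ofReal q₁₁ • Measure.dirac ((a / 2, -(a * Real.sqrt 3) / 2) : ℝ × ℝ)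
      + ENNReal.ofReal q₁₂ • Measure.dirac ((a / 2, a * Real.sqrt 3 / 2) : ℝ × ℝ))
    (hind : iIndepFun
      (fun k ω => (X k ω, Y k ω)) μ)
    (n : ℕ) :
    variance (fun ω => ∑ k ∈ Finset.range n, X k ω) μ =
      (9 * a ^ 2 / 8) * ((q₀₁ + q₀₂) - (q₀₁ + q₀₂) ^ 2 + (q₁₁ + q₁₂) - (q₁₁ + q₁₂) ^ 2) * n
      + (9 * a ^ 2 / 8) * ((q₀₁ + q₀₂) - (q₀₁ + q₀₂) ^ 2 - (q₁₁ + q₁₂) + (q₁₁ + q₁₂) ^ 2)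
        * ((1 - (-1 : ℝ) ^ n) / 2) := by
  -- marginal laws of X k
  have hmapX : ∀ k, μ.map (X k) = (μ.map (fun ω => (X k ω, Y k ω))).map Prod.fst := by
    intro k
    rw [Measure.map_map measurable_fst ((hXm k).prodMk (hYm k))]
    rfl
  have hlawX₀ : ∀ k, Even k → μ.map (X k) =
      ENNReal.ofReal q₀₀ • Measure.dirac a + ENNReal.ofReal q₀₁ • Measure.dirac (-a / 2)
        + ENNReal.ofReal q₀₂ • Measure.dirac (-a / 2) := by
    intro k hk
    rw [hmapX k, hlaw₀ k hk, Measure.map_add _ _ measurable_fst,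
      Measure.map_add _ _ measurable_fst, Measure.map_smul, Measure.map_smul,
      Measure.map_smul, Measure.map_dirac' measurable_fst, Measure.map_dirac' measurable_fst,
      Measure.map_dirac' measurable_fst]
  have hlawX₁ : ∀ k, Odd k → μ.map (X k) =
      ENNReal.ofReal q₁₀ • Measure.dirac (-a) + ENNReal.ofReal q₁₁ • Measure.dirac (a / 2)
        + ENNReal.ofReal q₁₂ • Measure.dirac (a / 2) := by
    intro k hk
    rw [hmapX k, hlaw₁ k hk, Measure.map_add _ _ measurable_fst,
      Measure.map_add _ _ measurable_fst, Measure.map_smul, Measure.map_smul,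
      Measure.map_smul, Measure.map_dirac' measurable_fst, Measure.map_dirac' measurable_fst,
      Measure.map_dirac' measurable_fst]
  have hmem : ∀ k, MemLp (X k) 2 μ := by
    intro k
    rcases Nat.even_or_odd k with hk | hk
    · exact memℒp_three_point μ _ (hXm k) _ _ _ _ _ _ (hlawX₀ k hk)
    · exact memℒp_three_point μ _ (hXm k) _ _ _ _ _ _ (hlawX₁ k hk)
  set A : ℝ := 9 * a ^ 2 / 4 * ((q₀₁ + q₀₂) - (q₀₁ + q₀₂) ^ 2) with hA
  set B : ℝ := 9 * a ^ 2 / 4 * ((q₁₁ + q₁₂) - (q₁₁ + q₁₂) ^ 2) with hB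
  have hvar : ∀ k, variance (X k) μ = if Even k then A else B := by
    intro k
    rcases Nat.even_or_odd k with hk | hk
    · rw [if_pos hk,
        variance_three_point μ _ (hXm k) _ _ _ _ _ _ hq₀₀ hq₀₁ hq₀₂ (hlawX₀ k hk), hA]
      have h00 : q₀₀ = 1 - (q₀₁ + q₀₂) := by linarith
      rw [h00]; ring
    · rw [if_neg (Nat.not_even_iff_odd.mpr hk),
        variance_three_point μ _ (hXm k) _ _ _ _ _ _ hq₁₀ hq₁₁ hq₁₂ (hlawX₁ k hk), hB]
      have h10 : q₁₀ = 1 - (q₁₁ + q₁₂) := by linarith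
      rw [h10]; ring
  have hpair : Set.Pairwise ↑(Finset.range n) fun i j => IndepFun (X i) (X j) μ := by
    intro i _ j _ hij
    exact (hind.indepFun hij).comp measurable_fst measurable_fst
  have hsum : (fun ω => ∑ k ∈ Finset.range n, X k ω) = ∑ k ∈ Finset.range n, X k := by
    ext ω; simp
  rw [hsum, IndepFun.variance_sum (fun i _ => hmem i) hpair]
  have : ∑ k ∈ Finset.range n, variance (X k) μ
      = ∑ k ∈ Finset.range n, (if Even k then A else B) :=
    Finset.sum_congr rfl fun k _ => hvar k
  rw [this, sum_parity]
  rw [hA, hB]; ring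
end

section
/- With the hexagonal lattice random walk of the previous setting, Cov(Xₙ, Yₙ) = σ₁₂ n + θ₅ iₙ for all n ∈ ℕ, where iₙ = (1-(-1)ⁿ)/2, σ₁₂ = (3√3 a²/8)[q₀₁(q₀₁-1) + q₀₂(1-q₀₂) - q₁₁(1-q₁₁) + q₁₂(1-q₁₂)], and θ₅ = (3√3 a²/8)[q₀₁(q₀₁-1) + q₀₂(1-q₀₂) + q₁₁(1-q₁₁) - q₁₂(1-q₁₂)]. -/
open MeasureTheory ProbabilityTheory

lemma integrable_dirac' {f : ℝ × ℝ → ℝ} (hf : Measurable f) (u : ℝ × ℝ) :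
    Integrable f (Measure.dirac u) := by
  refine ⟨hf.aestronglyMeasurable, ?_⟩
  rw [HasFiniteIntegral, lintegral_dirac]
  exact ENNReal.coe_lt_top

lemma mix_integrable {p q r : ℝ} (u v w : ℝ × ℝ) (f : ℝ × ℝ → ℝ) (hf : Measurable f) :
    Integrable f (ENNReal.ofReal p • Measure.dirac u + ENNReal.ofReal q • Measure.dirac v
      + ENNReal.ofReal r • Measure.dirac w) := by
  have h := fun (x : ℝ × ℝ) (c : ℝ) =>
    (integrable_dirac' hf x).smul_measure (c := ENNReal.ofReal c) ENNReal.ofReal_ne_top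
  exact Integrable.add_measure (Integrable.add_measure (h u p) (h v q)) (h w r)

lemma mix_integral {p q r : ℝ} (hp : 0 ≤ p) (hq : 0 ≤ q) (hr : 0 ≤ r)
    (u v w : ℝ × ℝ) (f : ℝ × ℝ → ℝ) (hf : Measurable f) :
    ∫ x, f x ∂(ENNReal.ofReal p • Measure.dirac u + ENNReal.ofReal q • Measure.dirac v
      + ENNReal.ofReal r • Measure.dirac w) = p * f u + q * f v + r * f w := by
  have h := fun (x : ℝ × ℝ) (c : ℝ) =>
    (integrable_dirac' hf x).smul_measure (c := ENNReal.ofReal c) ENNReal.ofReal_ne_top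
  rw [integral_add_measure (Integrable.add_measure (h u p) (h v q)) (h w r),
    integral_add_measure (h u p) (h v q), integral_smul_measure, integral_smul_measure,
    integral_smul_measure, integral_dirac, integral_dirac, integral_dirac,
    ENNReal.toReal_ofReal hp, ENNReal.toReal_ofReal hq, ENNReal.toReal_ofReal hr]
  simp [smul_eq_mul]

lemma sum_neg_one_pow (n : ℕ) :
    ∑ k ∈ Finset.range n, ((-1 : ℝ)) ^ k = (1 - (-1 : ℝ) ^ n) / 2 := by
  induction n with
  | zero => simp
  | succ m ih => rw [Finset.sum_range_succ, ih, pow_succ]; ring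

theorem stmt_13 {Ω : Type*} [MeasurableSpace Ω] (μ : Measure Ω) [IsProbabilityMeasure μ]
    (a : ℝ) (ha : 0 < a)
    (q₀₀ q₀₁ q₀₂ q₁₀ q₁₁ q₁₂ : ℝ)
    (hq₀₀ : 0 ≤ q₀₀) (hq₀₁ : 0 ≤ q₀₁) (hq₀₂ : 0 ≤ q₀₂)
    (hq₁₀ : 0 ≤ q₁₀) (hq₁₁ : 0 ≤ q₁₁) (hq₁₂ : 0 ≤ q₁₂)
    (hsum₀ : q₀₀ + q₀₁ + q₀₂ = 1) (hsum₁ : q₁₀ + q₁₁ + q₁₂ = 1)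
    (X Y : ℕ → Ω → ℝ)
    (hXm : ∀ k, Measurable (X k)) (hYm : ∀ k, Measurable (Y k))
    (hlaw₀ : ∀ k, Even k → μ.map (fun ω => (X k ω, Y k ω)) =
        ENNReal.ofReal q₀₀ • Measure.dirac ((a, 0) : ℝ × ℝ)
      + ENNReal.ofReal q₀₁ • Measure.dirac ((-a / 2, a * Real.sqrt 3 / 2) : ℝ × ℝ)
      + ENNReal.ofReal q₀₂ • Measure.dirac ((-a / 2, -(a * Real.sqrt 3) / 2) : ℝ × ℝ))
    (hlaw₁ : ∀ k, Odd k → μ.map (fun ω => (X k ω, Y k ω)) =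
        ENNReal.ofReal q₁₀ • Measure.dirac ((-a, 0) : ℝ × ℝ)
      + ENNReal.ofReal q₁₁ • Measure.dirac ((a / 2, -(a * Real.sqrt 3) / 2) : ℝ × ℝ)
      + ENNReal.ofReal q₁₂ • Measure.dirac ((a / 2, a * Real.sqrt 3 / 2) : ℝ × ℝ))
    (hind : iIndepFun
      (fun k ω => (X k ω, Y k ω)) μ)
    (n : ℕ) :
    ∫ ω, ((∑ k ∈ Finset.range n, X k ω) - ∫ ω', (∑ k ∈ Finset.range n, X k ω') ∂μ)
        * ((∑ k ∈ Finset.range n, Y k ω) - ∫ ω', (∑ k ∈ Finset.range n, Y k ω') ∂μ) ∂μ =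
      (3 * Real.sqrt 3 * a ^ 2 / 8)
        * (q₀₁ * (q₀₁ - 1) + q₀₂ * (1 - q₀₂) - q₁₁ * (1 - q₁₁) + q₁₂ * (1 - q₁₂)) * n
      + (3 * Real.sqrt 3 * a ^ 2 / 8)
        * (q₀₁ * (q₀₁ - 1) + q₀₂ * (1 - q₀₂) + q₁₁ * (1 - q₁₁) - q₁₂ * (1 - q₁₂))
        * ((1 - (-1 : ℝ) ^ n) / 2) := by
  set s := Real.sqrt 3 with hs
  have hpm : ∀ k, Measurable (fun ω => (X k ω, Y k ω)) := fun k => (hXm k).prodMk (hYm k)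
  -- generic integrability and integral formula
  have hInt : ∀ k (f : ℝ × ℝ → ℝ), Measurable f →
      Integrable (fun ω => f (X k ω, Y k ω)) μ := by
    intro k f hf
    rcases Nat.even_or_odd k with hk | hk
    · exact (integrable_map_measure hf.aestronglyMeasurable (hpm k).aemeasurable).mp
        (by rw [hlaw₀ k hk]; exact mix_integrable _ _ _ f hf)
    · exact (integrable_map_measure hf.aestronglyMeasurable (hpm k).aemeasurable).mp
        (by rw [hlaw₁ k hk]; exact mix_integrable _ _ _ f hf)
  have hEe : ∀ k, Even k → ∀ (f : ℝ × ℝ → ℝ), Measurable f →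
      ∫ ω, f (X k ω, Y k ω) ∂μ =
        q₀₀ * f (a, 0) + q₀₁ * f (-a/2, a*s/2) + q₀₂ * f (-a/2, -(a*s)/2) := by
    intro k hk f hf
    rw [← integral_map (hpm k).aemeasurable hf.aestronglyMeasurable, hlaw₀ k hk,
      mix_integral hq₀₀ hq₀₁ hq₀₂ _ _ _ f hf]
  have hEo : ∀ k, Odd k → ∀ (f : ℝ × ℝ → ℝ), Measurable f →
      ∫ ω, f (X k ω, Y k ω) ∂μ =
        q₁₀ * f (-a, 0) + q₁₁ * f (a/2, -(a*s)/2) + q₁₂ * f (a/2, a*s/2) := by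
    intro k hk f hf
    rw [← integral_map (hpm k).aemeasurable hf.aestronglyMeasurable, hlaw₁ k hk,
      mix_integral hq₁₀ hq₁₁ hq₁₂ _ _ _ f hf]
  -- means
  set mX : ℕ → ℝ := fun k => ∫ ω, X k ω ∂μ with hmX
  set mY : ℕ → ℝ := fun k => ∫ ω, Y k ω ∂μ with hmY
  have hXint : ∀ k, Integrable (X k) μ := fun k => hInt k Prod.fst measurable_fst
  have hYint : ∀ k, Integrable (Y k) μ := fun k => hInt k Prod.snd measurable_snd
  set σ : ℝ := (3 * s * a ^ 2 / 8)
        * (q₀₁ * (q₀₁ - 1) + q₀₂ * (1 - q₀₂) - q₁₁ * (1 - q₁₁) + q₁₂ * (1 - q₁₂)) with hσ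
  set θ : ℝ := (3 * s * a ^ 2 / 8)
        * (q₀₁ * (q₀₁ - 1) + q₀₂ * (1 - q₀₂) + q₁₁ * (1 - q₁₁) - q₁₂ * (1 - q₁₂)) with hθ
  -- diagonal covariance
  have hcov : ∀ k, ∫ ω, (X k ω - mX k) * (Y k ω - mY k) ∂μ = σ + θ * (-1 : ℝ) ^ k := by
    intro k
    have hfm : Measurable (fun p : ℝ × ℝ => (p.1 - mX k) * (p.2 - mY k)) :=
      (measurable_fst.sub measurable_const).mul (measurable_snd.sub measurable_const)
    rcases Nat.even_or_odd k with hk | hk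
    · have hx : mX k = q₀₀ * a + q₀₁ * (-a/2) + q₀₂ * (-a/2) := by
        have := hEe k hk Prod.fst measurable_fst; simpa [hmX] using this
      have hy : mY k = q₀₀ * 0 + q₀₁ * (a*s/2) + q₀₂ * (-(a*s)/2) := by
        have := hEe k hk Prod.snd measurable_snd; simpa [hmY] using this
      have h := hEe k hk _ hfm
      rw [show ∫ ω, (fun p : ℝ × ℝ => (p.1 - mX k) * (p.2 - mY k)) (X k ω, Y k ω) ∂μ
          = ∫ ω, (X k ω - mX k) * (Y k ω - mY k) ∂μ from rfl] at h
      rw [h, hx, hy, hk.neg_one_pow, hσ, hθ]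
      have h0 : q₀₀ = 1 - q₀₁ - q₀₂ := by linarith
      rw [h0]; ring
    · have hx : mX k = q₁₀ * (-a) + q₁₁ * (a/2) + q₁₂ * (a/2) := by
        have := hEo k hk Prod.fst measurable_fst; simpa [hmX] using this
      have hy : mY k = q₁₀ * 0 + q₁₁ * (-(a*s)/2) + q₁₂ * (a*s/2) := by
        have := hEo k hk Prod.snd measurable_snd; simpa [hmY] using this
      have h := hEo k hk _ hfm
      rw [show ∫ ω, (fun p : ℝ × ℝ => (p.1 - mX k) * (p.2 - mY k)) (X k ω, Y k ω) ∂μ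
          = ∫ ω, (X k ω - mX k) * (Y k ω - mY k) ∂μ from rfl] at h
      rw [h, hx, hy, hk.neg_one_pow, hσ, hθ]
      have h1 : q₁₀ = 1 - q₁₁ - q₁₂ := by linarith
      rw [h1]; ring
  -- centered variables
  have hXcint : ∀ k, Integrable (fun ω => X k ω - mX k) μ :=
    fun k => (hXint k).sub (integrable_const _)
  have hYcint : ∀ k, Integrable (fun ω => Y k ω - mY k) μ :=
    fun k => (hYint k).sub (integrable_const _)
  have hXcmean : ∀ k, ∫ ω, (X k ω - mX k) ∂μ = 0 := by
    intro k
    rw [integral_sub (hXint k) (integrable_const _), integral_const]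
    simp [hmX]
  have hYcmean : ∀ k, ∫ ω, (Y k ω - mY k) ∂μ = 0 := by
    intro k
    rw [integral_sub (hYint k) (integrable_const _), integral_const]
    simp [hmY]
  -- independence of centered variables for j ≠ k
  have hindjk : ∀ j k, j ≠ k →
      IndepFun (fun ω => X j ω - mX j) (fun ω => Y k ω - mY k) μ := by
    intro j k hjk
    have h := hind.indepFun hjk
    exact h.comp (φ := fun p : ℝ × ℝ => p.1 - mX j) (ψ := fun p : ℝ × ℝ => p.2 - mY k)
      (measurable_fst.sub measurable_const) (measurable_snd.sub measurable_const)
  -- integrability of each product term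
  have hprodint : ∀ j k, Integrable (fun ω => (X j ω - mX j) * (Y k ω - mY k)) μ := by
    intro j k
    rcases eq_or_ne j k with rfl | hjk
    · exact hInt j (fun p => (p.1 - mX j) * (p.2 - mY j))
        ((measurable_fst.sub measurable_const).mul (measurable_snd.sub measurable_const))
    · exact (hindjk j k hjk).integrable_mul (hXcint j) (hYcint k)
  have hterm : ∀ j k, j ≠ k → ∫ ω, (X j ω - mX j) * (Y k ω - mY k) ∂μ = 0 := by
    intro j k hjk
    have := (hindjk j k hjk).integral_mul_eq_mul_integral (hXcint j).aestronglyMeasurable (hYcint k).aestronglyMeasurable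
    rw [show ((fun ω => X j ω - mX j) * fun ω => Y k ω - mY k)
        = fun ω => (X j ω - mX j) * (Y k ω - mY k) from rfl] at this
    rw [this, hXcmean, hYcmean, mul_zero]
  -- rewrite the LHS
  have hESx : ∫ ω', (∑ k ∈ Finset.range n, X k ω') ∂μ = ∑ k ∈ Finset.range n, mX k :=
    integral_finset_sum _ (fun k _ => hXint k)
  have hESy : ∫ ω', (∑ k ∈ Finset.range n, Y k ω') ∂μ = ∑ k ∈ Finset.range n, mY k :=
    integral_finset_sum _ (fun k _ => hYint k)
  rw [hESx, hESy]
  have hre : ∀ ω, ((∑ k ∈ Finset.range n, X k ω) - ∑ k ∈ Finset.range n, mX k)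
      * ((∑ k ∈ Finset.range n, Y k ω) - ∑ k ∈ Finset.range n, mY k)
      = ∑ j ∈ Finset.range n, ∑ k ∈ Finset.range n,
          (X j ω - mX j) * (Y k ω - mY k) := by
    intro ω
    rw [← Finset.sum_sub_distrib, ← Finset.sum_sub_distrib, Finset.sum_mul_sum]
  simp only [hre]
  rw [integral_finset_sum _ (fun j _ => integrable_finset_sum _ (fun k _ => hprodint j k))]
  have hsum : ∀ j ∈ Finset.range n,
      ∫ ω, ∑ k ∈ Finset.range n, (X j ω - mX j) * (Y k ω - mY k) ∂μ
        = σ + θ * (-1 : ℝ) ^ j := by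
    intro j hj
    rw [integral_finset_sum _ (fun k _ => hprodint j k)]
    rw [Finset.sum_eq_single j (fun k _ hkj => hterm j k (Ne.symm hkj)) (fun h => absurd hj h)]
    exact hcov j
  rw [Finset.sum_congr rfl hsum, Finset.sum_add_distrib, Finset.sum_const,
    ← Finset.mul_sum, sum_neg_one_pow]
  simp [nsmul_eq_mul, mul_comm]
end

section
/- Let G(u,v;n) = E[u^{Xₙ} v^{Yₙ}] be the probability generating function of the hexagonal lattice random walk. Then for every (λ₁, λ₂) ∈ ℝ², the limit lim_{n→∞} (1/n) log G(e^{λ₁}, e^{λ₂}; n) exists and equals Λ(λ₁,λ₂) = (1/2) log(g₀(λ₁,λ₂) g₁(λ₁,λ₂)), where gᵢ(λ₁,λ₂) = q_{i,0} + q_{i,1} exp((-1)^i √3 a(-(√3/2)λ₁ + (1/2)λ₂)) + q_{i,2} exp((-1)^{i+1} √3 a((√3/2)λ₁ + (1/2)λ₂)) for i = 0,1. -/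
open MeasureTheory ProbabilityTheory

lemma integrable_dirac_sm {α E : Type*} [MeasurableSpace α] [NormedAddCommGroup E]
    {f : α → E} (hf : StronglyMeasurable f) (x : α) :
    Integrable f (Measure.dirac x) := by
  refine ⟨hf.aestronglyMeasurable, ?_⟩
  rw [HasFiniteIntegral, lintegral_dirac' x hf.enorm]
  exact enorm_lt_top

lemma integral_three_mix (q₀ q₁ q₂ : ℝ) (x₀ x₁ x₂ : ℝ × ℝ)
    (h₀ : 0 ≤ q₀) (h₁ : 0 ≤ q₁) (h₂ : 0 ≤ q₂)
    {φ : ℝ × ℝ → ℝ} (hφ : StronglyMeasurable φ) :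
    ∫ p, φ p ∂(ENNReal.ofReal q₀ • Measure.dirac x₀ + ENNReal.ofReal q₁ • Measure.dirac x₁
      + ENNReal.ofReal q₂ • Measure.dirac x₂)
    = q₀ * φ x₀ + q₁ * φ x₁ + q₂ * φ x₂ := by
  have hint : ∀ (q : ℝ) (x : ℝ × ℝ), Integrable φ (ENNReal.ofReal q • Measure.dirac x) :=
    fun q x => (integrable_dirac_sm hφ x).smul_measure ENNReal.ofReal_ne_top
  rw [integral_add_measure ((hint _ _).add_measure (hint _ _)) (hint _ _),
    integral_add_measure (hint _ _) (hint _ _), integral_smul_measure, integral_smul_measure,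
    integral_smul_measure, integral_dirac' _ _ hφ, integral_dirac' _ _ hφ, integral_dirac' _ _ hφ,
    ENNReal.toReal_ofReal h₀, ENNReal.toReal_ofReal h₁, ENNReal.toReal_ofReal h₂]
  simp [smul_eq_mul]

theorem stmt_14 {Ω : Type*} [MeasurableSpace Ω] (μ : Measure Ω) [IsProbabilityMeasure μ]
    (a : ℝ) (ha : 0 < a)
    (q₀₀ q₀₁ q₀₂ q₁₀ q₁₁ q₁₂ : ℝ)
    (hq₀₀ : 0 < q₀₀) (hq₀₁ : 0 < q₀₁) (hq₀₂ : 0 < q₀₂)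
    (hq₁₀ : 0 < q₁₀) (hq₁₁ : 0 < q₁₁) (hq₁₂ : 0 < q₁₂)
    (hsum₀ : q₀₀ + q₀₁ + q₀₂ = 1) (hsum₁ : q₁₀ + q₁₁ + q₁₂ = 1)
    (X Y : ℕ → Ω → ℝ)
    (hXm : ∀ k, Measurable (X k)) (hYm : ∀ k, Measurable (Y k))
    (hlaw₀ : ∀ k, Even k → μ.map (fun ω => (X k ω, Y k ω)) =
        ENNReal.ofReal q₀₀ • Measure.dirac ((a, 0) : ℝ × ℝ)
      + ENNReal.ofReal q₀₁ • Measure.dirac ((-a / 2, a * Real.sqrt 3 / 2) : ℝ × ℝ)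
      + ENNReal.ofReal q₀₂ • Measure.dirac ((-a / 2, -(a * Real.sqrt 3) / 2) : ℝ × ℝ))
    (hlaw₁ : ∀ k, Odd k → μ.map (fun ω => (X k ω, Y k ω)) =
        ENNReal.ofReal q₁₀ • Measure.dirac ((-a, 0) : ℝ × ℝ)
      + ENNReal.ofReal q₁₁ • Measure.dirac ((a / 2, -(a * Real.sqrt 3) / 2) : ℝ × ℝ)
      + ENNReal.ofReal q₁₂ • Measure.dirac ((a / 2, a * Real.sqrt 3 / 2) : ℝ × ℝ))
    (hind : iIndepFun
      (fun k ω => (X k ω, Y k ω)) μ)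
    (lam₁ lam₂ : ℝ) :
    Filter.Tendsto (fun n : ℕ =>
        (1 / (n : ℝ)) * Real.log (∫ ω, Real.exp
          (lam₁ * ∑ k ∈ Finset.range n, X k ω + lam₂ * ∑ k ∈ Finset.range n, Y k ω) ∂μ))
      Filter.atTop
      (nhds ((1 / 2) * Real.log (
        (q₀₀ + q₀₁ * Real.exp (Real.sqrt 3 * a * (-(Real.sqrt 3 / 2) * lam₁ + (1 / 2) * lam₂))
             + q₀₂ * Real.exp (-(Real.sqrt 3 * a * ((Real.sqrt 3 / 2) * lam₁ + (1 / 2) * lam₂)))) *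
        (q₁₀ + q₁₁ * Real.exp (-(Real.sqrt 3 * a * (-(Real.sqrt 3 / 2) * lam₁ + (1 / 2) * lam₂)))
             + q₁₂ * Real.exp (Real.sqrt 3 * a * ((Real.sqrt 3 / 2) * lam₁ + (1 / 2) * lam₂)))))) := by
  have h3 : Real.sqrt 3 * Real.sqrt 3 = 3 := Real.mul_self_sqrt (by norm_num)
  set g₀ : ℝ := q₀₀ + q₀₁ * Real.exp (Real.sqrt 3 * a * (-(Real.sqrt 3 / 2) * lam₁ + (1 / 2) * lam₂))
      + q₀₂ * Real.exp (-(Real.sqrt 3 * a * ((Real.sqrt 3 / 2) * lam₁ + (1 / 2) * lam₂))) with hg₀def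
  set g₁ : ℝ := q₁₀ + q₁₁ * Real.exp (-(Real.sqrt 3 * a * (-(Real.sqrt 3 / 2) * lam₁ + (1 / 2) * lam₂)))
      + q₁₂ * Real.exp (Real.sqrt 3 * a * ((Real.sqrt 3 / 2) * lam₁ + (1 / 2) * lam₂)) with hg₁def
  have hg₀pos : 0 < g₀ :=
    add_pos (add_pos hq₀₀ (mul_pos hq₀₁ (Real.exp_pos _))) (mul_pos hq₀₂ (Real.exp_pos _))
  have hg₁pos : 0 < g₁ :=
    add_pos (add_pos hq₁₀ (mul_pos hq₁₁ (Real.exp_pos _))) (mul_pos hq₁₂ (Real.exp_pos _))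
  set φ : ℝ × ℝ → ℝ := fun p => Real.exp (lam₁ * p.1 + lam₂ * p.2) with hφdef
  have hφc : Continuous φ := by fun_prop
  have hφ : StronglyMeasurable φ := hφc.stronglyMeasurable
  set Z : ℕ → Ω → ℝ := fun k ω => lam₁ * X k ω + lam₂ * Y k ω with hZdef
  have hZm : ∀ k, Measurable (Z k) := fun k =>
    ((hXm k).const_mul lam₁).add ((hYm k).const_mul lam₂)
  have hindZ : iIndepFun Z μ :=
    hind.comp (fun _ (p : ℝ × ℝ) => lam₁ * p.1 + lam₂ * p.2) (fun _ => by fun_prop)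
  set c : ℕ → ℝ := fun k =>
    if Even k then Real.exp (a * lam₁) * g₀ else Real.exp (-(a * lam₁)) * g₁ with hcdef
  have hcpos : ∀ k, 0 < c k := by
    intro k
    by_cases hk : Even k
    · simpa [hcdef, hk] using mul_pos (Real.exp_pos _) hg₀pos
    · simpa [hcdef, hk] using mul_pos (Real.exp_pos _) hg₁pos
  have hmgf : ∀ k, mgf (Z k) μ 1 = c k := by
    intro k
    have hpairm : Measurable fun ω => (X k ω, Y k ω) := (hXm k).prodMk (hYm k)
    have key : mgf (Z k) μ 1 = ∫ p, φ p ∂(μ.map (fun ω => (X k ω, Y k ω))) := by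
      rw [integral_map hpairm.aemeasurable hφ.aestronglyMeasurable]
      simp [mgf, hZdef, hφdef]
    rcases Nat.even_or_odd k with hk | hk
    · rw [key, hlaw₀ k hk,
        integral_three_mix _ _ _ _ _ _ hq₀₀.le hq₀₁.le hq₀₂.le hφ, hcdef]
      simp only [hφdef, if_pos hk]
      rw [hg₀def]
      have t1 : lam₁ * a + lam₂ * 0 = a * lam₁ := by ring
      have t2 : Real.exp (lam₁ * (-a / 2) + lam₂ * (a * Real.sqrt 3 / 2))
          = Real.exp (a * lam₁) *
            Real.exp (Real.sqrt 3 * a * (-(Real.sqrt 3 / 2) * lam₁ + (1 / 2) * lam₂)) := by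
        rw [← Real.exp_add]; congr 1; linear_combination (a * lam₁ / 2) * h3
      have t3 : Real.exp (lam₁ * (-a / 2) + lam₂ * (-(a * Real.sqrt 3) / 2))
          = Real.exp (a * lam₁) *
            Real.exp (-(Real.sqrt 3 * a * ((Real.sqrt 3 / 2) * lam₁ + (1 / 2) * lam₂))) := by
        rw [← Real.exp_add]; congr 1; linear_combination (a * lam₁ / 2) * h3
      rw [t1, t2, t3]; ring
    · rw [key, hlaw₁ k hk,
        integral_three_mix _ _ _ _ _ _ hq₁₀.le hq₁₁.le hq₁₂.le hφ, hcdef]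
      simp only [hφdef, if_neg (Nat.not_even_iff_odd.mpr hk)]
      rw [hg₁def]
      have t1 : lam₁ * (-a) + lam₂ * 0 = -(a * lam₁) := by ring
      have t2 : Real.exp (lam₁ * (a / 2) + lam₂ * (-(a * Real.sqrt 3) / 2))
          = Real.exp (-(a * lam₁)) *
            Real.exp (-(Real.sqrt 3 * a * (-(Real.sqrt 3 / 2) * lam₁ + (1 / 2) * lam₂))) := by
        rw [← Real.exp_add]; congr 1; linear_combination (-(a * lam₁) / 2) * h3
      have t3 : Real.exp (lam₁ * (a / 2) + lam₂ * (a * Real.sqrt 3 / 2))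
          = Real.exp (-(a * lam₁)) *
            Real.exp (Real.sqrt 3 * a * ((Real.sqrt 3 / 2) * lam₁ + (1 / 2) * lam₂)) := by
        rw [← Real.exp_add]; congr 1; linear_combination (-(a * lam₁) / 2) * h3
      rw [t1, t2, t3]; ring
  have hint_eq : ∀ n : ℕ, (∫ ω, Real.exp
      (lam₁ * ∑ k ∈ Finset.range n, X k ω + lam₂ * ∑ k ∈ Finset.range n, Y k ω) ∂μ)
      = ∏ k ∈ Finset.range n, c k := by
    intro n
    have h1 : (∫ ω, Real.exp
        (lam₁ * ∑ k ∈ Finset.range n, X k ω + lam₂ * ∑ k ∈ Finset.range n, Y k ω) ∂μ)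
        = mgf (∑ k ∈ Finset.range n, Z k) μ 1 := by
      simp only [mgf, one_mul]
      congr 1
      funext ω
      congr 1
      simp only [Finset.sum_apply, hZdef]
      rw [Finset.mul_sum, Finset.mul_sum, ← Finset.sum_add_distrib]
    rw [h1, hindZ.mgf_sum hZm]
    exact Finset.prod_congr rfl fun k _ => hmgf k
  set M : ℝ := 1 / 2 * Real.log (g₀ * g₁) with hMdef
  have hM : M = (Real.log g₀ + Real.log g₁) / 2 := by
    rw [hMdef, Real.log_mul hg₀pos.ne' hg₁pos.ne']; ring
  set D : ℝ := ((a * lam₁ + Real.log g₀) - (-(a * lam₁) + Real.log g₁)) / 2 with hDdef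
  have hlogc : ∀ k, Real.log (c k) = M + (-1 : ℝ) ^ k * D := by
    intro k
    rcases Nat.even_or_odd k with hk | hk
    · rw [show c k = Real.exp (a * lam₁) * g₀ from if_pos hk,
        Real.log_mul (Real.exp_pos _).ne' hg₀pos.ne', Real.log_exp, hk.neg_one_pow, hM, hDdef]
      ring
    · rw [show c k = Real.exp (-(a * lam₁)) * g₁ from if_neg (Nat.not_even_iff_odd.mpr hk),
        Real.log_mul (Real.exp_pos _).ne' hg₁pos.ne', Real.log_exp, hk.neg_one_pow, hM, hDdef]
      ring
  have key : ∀ n : ℕ, 1 ≤ n → (1 / (n : ℝ)) * Real.log (∫ ω, Real.exp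
      (lam₁ * ∑ k ∈ Finset.range n, X k ω + lam₂ * ∑ k ∈ Finset.range n, Y k ω) ∂μ)
      = M + (((-1 : ℝ) ^ n - 1) / (-1 - 1)) * D * (1 / n) := by
    intro n hn
    rw [hint_eq n, Real.log_prod (fun k _ => (hcpos k).ne'),
      Finset.sum_congr rfl (fun k _ => hlogc k), Finset.sum_add_distrib, Finset.sum_const, Finset.card_range,
      ← Finset.sum_mul, geom_sum_eq (by norm_num) n]
    have hn0 : (n : ℝ) ≠ 0 := Nat.cast_ne_zero.mpr (by omega)
    field_simp
    ring
  have herr : Filter.Tendsto (fun n : ℕ => (((-1 : ℝ) ^ n - 1) / (-1 - 1)) * D * (1 / n))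
      Filter.atTop (nhds 0) := by
    refine squeeze_zero_norm (a := fun n : ℕ => |D| * (1 / n)) (fun n => ?_) ?_
    · 
      have hb : |((-1 : ℝ) ^ n - 1) / (-1 - 1)| ≤ 1 := by
        rcases Nat.even_or_odd n with hn | hn
        · rw [hn.neg_one_pow]; norm_num
        · rw [hn.neg_one_pow]; norm_num
      have h1n : (0 : ℝ) ≤ 1 / n := by positivity
      calc ‖(((-1 : ℝ) ^ n - 1) / (-1 - 1)) * D * (1 / n)‖
          = |((-1 : ℝ) ^ n - 1) / (-1 - 1)| * |D| * (1 / n) := by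
            rw [Real.norm_eq_abs, abs_mul, abs_mul, abs_of_nonneg h1n]
        _ ≤ 1 * |D| * (1 / n) := by
            exact mul_le_mul_of_nonneg_right (mul_le_mul_of_nonneg_right hb (abs_nonneg _)) h1n
        _ = |D| * (1 / n) := by ring
    · simpa using tendsto_one_div_atTop_nhds_zero_nat.const_mul |D|
  have hlim : Filter.Tendsto (fun n : ℕ => M + (((-1 : ℝ) ^ n - 1) / (-1 - 1)) * D * (1 / n))
      Filter.atTop (nhds M) := by
    simpa using tendsto_const_nhds.add herr
  exact Filter.Tendsto.congr'
    (Filter.eventually_atTop.2 ⟨1, fun n hn => (key n hn).symm⟩) hlim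
end

section
/- Let (Xₙ, Yₙ) be the hexagonal lattice random walk and suppose {aₙ} is a sequence of positive reals with aₙ → 0 and n·aₙ → ∞. Then for every (λ₁, λ₂) ∈ ℝ², aₙ·( log E[exp(λ₁ Xₙ/√(n aₙ) + λ₂ Yₙ/√(n aₙ))] − (λ₁ E[Xₙ] + λ₂ E[Yₙ])/√(n aₙ) ) converges as n → ∞ to (1/2)(λ₁² σ₁² + λ₂² σ₂² + 2 λ₁ λ₂ σ₁₂), where σ₁² = lim Var(Xₙ)/n, σ₂² = lim Var(Yₙ)/n, σ₁₂ = lim Cov(Xₙ,Yₙ)/n. -/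
open MeasureTheory ProbabilityTheory Real Filter

lemma key3 (q₀ q₁ q₂ c₀ c₁ c₂ : ℝ) (h0 : 0 < q₀) (h1 : 0 < q₁) (h2 : 0 < q₂)
    (hs : q₀ + q₁ + q₂ = 1) :
    Tendsto (fun t : ℝ =>
      (Real.log (q₀ * Real.exp (t * c₀) + q₁ * Real.exp (t * c₁) + q₂ * Real.exp (t * c₂))
        - t * (q₀ * c₀ + q₁ * c₁ + q₂ * c₂)) / t ^ 2)
      (nhdsWithin 0 {0}ᶜ)
      (nhds ((q₀ * c₀ ^ 2 + q₁ * c₁ ^ 2 + q₂ * c₂ ^ 2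
        - (q₀ * c₀ + q₁ * c₁ + q₂ * c₂) ^ 2) / 2)) := by
  set m : ℝ := q₀ * c₀ + q₁ * c₁ + q₂ * c₂ with hm
  set s : ℝ := q₀ * c₀ ^ 2 + q₁ * c₁ ^ 2 + q₂ * c₂ ^ 2 with hsdef
  set g : ℝ → ℝ := fun t => q₀ * Real.exp (t * c₀) + q₁ * Real.exp (t * c₁) + q₂ * Real.exp (t * c₂) with hg
  set g' : ℝ → ℝ := fun t => q₀ * c₀ * Real.exp (t * c₀) + q₁ * c₁ * Real.exp (t * c₁) + q₂ * c₂ * Real.exp (t * c₂) with hg'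
  set g'' : ℝ → ℝ := fun t => q₀ * c₀ ^ 2 * Real.exp (t * c₀) + q₁ * c₁ ^ 2 * Real.exp (t * c₁) + q₂ * c₂ ^ 2 * Real.exp (t * c₂) with hg''
  have hgpos : ∀ t, 0 < g t := fun t => by positivity
  have hexp : ∀ (c t : ℝ), HasDerivAt (fun t => Real.exp (t * c)) (c * Real.exp (t * c)) t := by
    intro c t
    have := ((hasDerivAt_id t).mul_const c).exp
    simpa [mul_comm] using this
  have hgd : ∀ t, HasDerivAt g (g' t) t := by
    intro t
    have := (((hexp c₀ t).const_mul q₀).add ((hexp c₁ t).const_mul q₁)).add ((hexp c₂ t).const_mul q₂)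
    exact this.congr_deriv (by ring)
  have hg'd : ∀ t, HasDerivAt g' (g'' t) t := by
    intro t
    have := (((hexp c₀ t).const_mul (q₀ * c₀)).add ((hexp c₁ t).const_mul (q₁ * c₁))).add
      ((hexp c₂ t).const_mul (q₂ * c₂))
    exact this.congr_deriv (by ring)
  set f : ℝ → ℝ := fun t => Real.log (g t) - t * m with hf
  set f' : ℝ → ℝ := fun t => g' t / g t - m with hf'
  have hfd : ∀ t, HasDerivAt f (f' t) t := by
    intro t
    have hlog := (hgd t).log (hgpos t).ne'
    have := hlog.sub ((hasDerivAt_id t).mul_const m)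
    exact this.congr_deriv (by simp [hf'])
  have hg0 : g 0 = 1 := by simp [hg, hs]
  have hg'0 : g' 0 = m := by simp [hg', hm]
  have hg''0 : g'' 0 = s := by simp [hg'', hsdef]
  have hf'0 : f' 0 = 0 := by simp [hf', hg'0, hg0]
  have hf0 : f 0 = 0 := by simp [hf, hg0]
  have hf'd : HasDerivAt f' (s - m ^ 2) 0 := by
    have hdiv := (hg'd 0).div (hgd 0) (hgpos 0).ne'
    have := hdiv.sub_const m
    rw [hg0, hg'0, hg''0] at this
    exact this.congr_deriv (by ring)
  -- slope limit
  have hslope : Tendsto (fun t : ℝ => f' t / t) (nhdsWithin 0 {0}ᶜ) (nhds (s - m ^ 2)) := by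
    have h := hasDerivAt_iff_tendsto_slope.mp hf'd
    have heq : slope f' 0 = fun t : ℝ => f' t / t := by
      funext t
      simp [slope_def_field, hf'0]
    rwa [heq] at h
  have hdiv : Tendsto (fun t : ℝ => f' t / (2 * t)) (nhdsWithin 0 {0}ᶜ) (nhds ((s - m ^ 2) / 2)) := by
    have h := hslope.div_const 2
    have heq : (fun t : ℝ => f' t / t / 2) = fun t : ℝ => f' t / (2 * t) := by
      funext t
      rw [div_div, mul_comm]
    rwa [heq] at h
  have hfa : Tendsto f (nhdsWithin 0 {0}ᶜ) (nhds 0) := by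
    have h := (hfd 0).continuousAt.tendsto
    rw [hf0] at h
    exact tendsto_nhdsWithin_of_tendsto_nhds h
  have hga : Tendsto (fun t : ℝ => t ^ 2) (nhdsWithin 0 {0}ᶜ) (nhds 0) := by
    exact tendsto_nhdsWithin_of_tendsto_nhds
      ((continuous_pow 2).tendsto' 0 0 (by norm_num))
  exact HasDerivAt.lhopital_zero_nhdsNE
    (Filter.Eventually.of_forall (fun t => hfd t))
    (Filter.Eventually.of_forall (fun t => by simpa using (hasDerivAt_pow 2 t)))
    (by
      filter_upwards [self_mem_nhdsWithin] with t ht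
      exact mul_ne_zero two_ne_zero (by simpa using ht))
    hfa hga (by simpa using hdiv)

lemma integrable_dirac'_s18 {φ : ℝ × ℝ → ℝ} (hφ : Measurable φ) (p : ℝ × ℝ) :
    Integrable φ (Measure.dirac p) := by
  refine ⟨hφ.aestronglyMeasurable, ?_⟩
  rw [HasFiniteIntegral, MeasureTheory.lintegral_dirac' _ (by fun_prop)]
  exact lt_top_iff_ne_top.mpr (by simp)

lemma law_int {Ω : Type*} [MeasurableSpace Ω] (μ : Measure Ω) (pr : Ω → ℝ × ℝ)
    (hpr : Measurable pr)
    (q₀ q₁ q₂ : ℝ) (h0 : 0 ≤ q₀) (h1 : 0 ≤ q₁) (h2 : 0 ≤ q₂) (p₀ p₁ p₂ : ℝ × ℝ)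
    (hν : μ.map pr = ENNReal.ofReal q₀ • Measure.dirac p₀
      + ENNReal.ofReal q₁ • Measure.dirac p₁ + ENNReal.ofReal q₂ • Measure.dirac p₂)
    (φ : ℝ × ℝ → ℝ) (hφ : Measurable φ) :
    Integrable (fun ω => φ (pr ω)) μ ∧
      ∫ ω, φ (pr ω) ∂μ = q₀ * φ p₀ + q₁ * φ p₁ + q₂ * φ p₂ := by
  have hi : ∀ (q : ℝ) (p : ℝ × ℝ), Integrable φ (ENNReal.ofReal q • Measure.dirac p) :=
    fun q p => (integrable_dirac'_s18 hφ p).smul_measure ENNReal.ofReal_ne_top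
  have hiν : Integrable φ (μ.map pr) := by
    rw [hν]
    exact ((hi q₀ p₀).add_measure (hi q₁ p₁)).add_measure (hi q₂ p₂)
  have hint : Integrable (fun ω => φ (pr ω)) μ := by
    have := (integrable_map_measure hφ.aestronglyMeasurable hpr.aemeasurable).mp hiν
    exact this
  refine ⟨hint, ?_⟩
  have h1' : ∫ ω, φ (pr ω) ∂μ = ∫ p, φ p ∂(μ.map pr) :=
    (integral_map hpr.aemeasurable hφ.aestronglyMeasurable).symm
  rw [h1', hν]
  rw [integral_add_measure ((hi q₀ p₀).add_measure (hi q₁ p₁)) (hi q₂ p₂),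
    integral_add_measure (hi q₀ p₀) (hi q₁ p₁)]
  simp [integral_smul_measure, integral_dirac, ENNReal.toReal_ofReal, h0, h1, h2, smul_eq_mul]
lemma step_facts {Ω : Type*} [MeasurableSpace Ω] (μ : Measure Ω)
    (Xk Yk : Ω → ℝ) (hXm : Measurable Xk) (hYm : Measurable Yk)
    (q₀ q₁ q₂ : ℝ) (h0 : 0 ≤ q₀) (h1 : 0 ≤ q₁) (h2 : 0 ≤ q₂)
    (x₀ y₀ x₁ y₁ x₂ y₂ : ℝ)
    (hlaw : μ.map (fun ω => (Xk ω, Yk ω)) = ENNReal.ofReal q₀ • Measure.dirac (x₀, y₀)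
      + ENNReal.ofReal q₁ • Measure.dirac (x₁, y₁) + ENNReal.ofReal q₂ • Measure.dirac (x₂, y₂))
    (lam₁ lam₂ : ℝ) :
    (∀ t : ℝ, mgf (fun ω => lam₁ * Xk ω + lam₂ * Yk ω) μ t
      = q₀ * Real.exp (t * (lam₁ * x₀ + lam₂ * y₀)) + q₁ * Real.exp (t * (lam₁ * x₁ + lam₂ * y₁))
        + q₂ * Real.exp (t * (lam₁ * x₂ + lam₂ * y₂)))
    ∧ Integrable Xk μ ∧ (∫ ω, Xk ω ∂μ) = q₀ * x₀ + q₁ * x₁ + q₂ * x₂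
    ∧ Integrable Yk μ ∧ (∫ ω, Yk ω ∂μ) = q₀ * y₀ + q₁ * y₁ + q₂ * y₂ := by
  have hpr : Measurable (fun ω => (Xk ω, Yk ω)) := hXm.prodMk hYm
  refine ⟨?_, ?_, ?_, ?_, ?_⟩
  · intro t
    have h := (law_int μ _ hpr q₀ q₁ q₂ h0 h1 h2 _ _ _ hlaw
      (fun p : ℝ × ℝ => Real.exp (t * (lam₁ * p.1 + lam₂ * p.2))) (by fun_prop)).2
    simpa [mgf] using h
  · have h := (law_int μ _ hpr q₀ q₁ q₂ h0 h1 h2 _ _ _ hlaw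
      (fun p : ℝ × ℝ => p.1) measurable_fst).1
    simpa using h
  · have h := (law_int μ _ hpr q₀ q₁ q₂ h0 h1 h2 _ _ _ hlaw
      (fun p : ℝ × ℝ => p.1) measurable_fst).2
    simpa using h
  · have h := (law_int μ _ hpr q₀ q₁ q₂ h0 h1 h2 _ _ _ hlaw
      (fun p : ℝ × ℝ => p.2) measurable_snd).1
    simpa using h
  · have h := (law_int μ _ hpr q₀ q₁ q₂ h0 h1 h2 _ _ _ hlaw
      (fun p : ℝ × ℝ => p.2) measurable_snd).2
    simpa using h

lemma card_even_range (n : ℕ) :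
    ((Finset.range n).filter (fun k => Even k)).card = (n + 1) / 2 := by
  induction n with
  | zero => simp
  | succ n ih =>
    rw [Finset.range_add_one, Finset.filter_insert]
    by_cases h : Even n
    · rw [if_pos h, Finset.card_insert_of_notMem (by simp), ih]
      rw [Nat.even_iff] at h
      omega
    · rw [if_neg h, ih]
      rw [Nat.even_iff] at h
      omega

lemma card_odd_range (n : ℕ) :
    ((Finset.range n).filter (fun k => ¬ Even k)).card = n / 2 := by
  induction n with
  | zero => simp
  | succ n ih =>
    rw [Finset.range_add_one, Finset.filter_insert]
    by_cases h : Even n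
    · rw [if_neg (by simpa using h), ih]
      rw [Nat.even_iff] at h
      omega
    · rw [if_pos h, Finset.card_insert_of_notMem (by simp), ih]
      rw [Nat.even_iff] at h
      omega

lemma ratio_tendsto_half (N : ℕ → ℕ) (h1 : ∀ n : ℕ, (n : ℝ) - 1 ≤ 2 * (N n : ℝ))
    (h2 : ∀ n, (2 * N n : ℝ) ≤ n + 1) :
    Tendsto (fun n => (N n : ℝ) / n) atTop (nhds (1 / 2)) := by
  have hlo : Tendsto (fun n : ℕ => 1 / 2 - 1 / (n : ℝ)) atTop (nhds (1 / 2)) := by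
    simpa using (tendsto_const_nhds (x := (1 / 2 : ℝ))).sub tendsto_one_div_atTop_nhds_zero_nat
  have hhi : Tendsto (fun n : ℕ => 1 / 2 + 1 / (n : ℝ)) atTop (nhds (1 / 2)) := by
    simpa using (tendsto_const_nhds (x := (1 / 2 : ℝ))).add tendsto_one_div_atTop_nhds_zero_nat
  refine tendsto_of_tendsto_of_tendsto_of_le_of_le' hlo hhi ?_ ?_
  · filter_upwards [eventually_ge_atTop 1] with n hn
    have hn' : (0 : ℝ) < n := by exact_mod_cast hn
    rw [le_div_iff₀ hn']
    have h := h1 n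
    have e : (1 / 2 - 1 / (n : ℝ)) * n = n / 2 - 1 := by field_simp
    rw [e]; linarith
  · filter_upwards [eventually_ge_atTop 1] with n hn
    have hn' : (0 : ℝ) < n := by exact_mod_cast hn
    rw [div_le_iff₀ hn']
    have h := h2 n
    have e : (1 / 2 + 1 / (n : ℝ)) * n = n / 2 + 1 := by field_simp
    rw [e]; linarith

lemma sqrt_inv_tendsto {b : ℕ → ℝ} (hb : Tendsto b atTop atTop) :
    Tendsto (fun n => (Real.sqrt (b n))⁻¹) atTop (nhds 0) := by
  have hs : Tendsto Real.sqrt atTop atTop := by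
    rw [tendsto_atTop_atTop]
    intro c
    refine ⟨(max c 0) ^ 2, fun x hx => ?_⟩
    calc c ≤ max c 0 := le_max_left _ _
    _ = Real.sqrt ((max c 0) ^ 2) := (Real.sqrt_sq (le_max_right _ _)).symm
    _ ≤ Real.sqrt x := Real.sqrt_le_sqrt hx
  exact tendsto_inv_atTop_zero.comp (hs.comp hb)

lemma assemble {s nn aa A B m0 m1 mx0 my0 mx1 my1 l1 l2 : ℝ} {N0 N1 : ℕ}
    (hs : s ≠ 0) (hn : nn ≠ 0) (haa : aa = s ^ 2 / nn)
    (hm0 : m0 = l1 * mx0 + l2 * my0) (hm1 : m1 = l1 * mx1 + l2 * my1) :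
    aa * ((N0 : ℝ) * A + (N1 : ℝ) * B
      - (l1 * ((N0 : ℝ) * mx0 + (N1 : ℝ) * mx1) + l2 * ((N0 : ℝ) * my0 + (N1 : ℝ) * my1)) / s)
    = ((N0 : ℝ) / nn) * ((A - s⁻¹ * m0) / s⁻¹ ^ 2)
      + ((N1 : ℝ) / nn) * ((B - s⁻¹ * m1) / s⁻¹ ^ 2) := by
  subst haa hm0 hm1
  field_simp
  ring

theorem stmt_18 {Ω : Type*} [MeasurableSpace Ω] (μ : Measure Ω) [IsProbabilityMeasure μ]
    (a : ℝ) (ha : 0 < a)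
    (q₀₀ q₀₁ q₀₂ q₁₀ q₁₁ q₁₂ : ℝ)
    (hq₀₀ : 0 < q₀₀) (hq₀₁ : 0 < q₀₁) (hq₀₂ : 0 < q₀₂)
    (hq₁₀ : 0 < q₁₀) (hq₁₁ : 0 < q₁₁) (hq₁₂ : 0 < q₁₂)
    (hsum₀ : q₀₀ + q₀₁ + q₀₂ = 1) (hsum₁ : q₁₀ + q₁₁ + q₁₂ = 1)
    (X Y : ℕ → Ω → ℝ)
    (hXm : ∀ k, Measurable (X k)) (hYm : ∀ k, Measurable (Y k))
    (hlaw₀ : ∀ k, Even k → μ.map (fun ω => (X k ω, Y k ω)) =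
        ENNReal.ofReal q₀₀ • Measure.dirac ((a, 0) : ℝ × ℝ)
      + ENNReal.ofReal q₀₁ • Measure.dirac ((-a / 2, a * Real.sqrt 3 / 2) : ℝ × ℝ)
      + ENNReal.ofReal q₀₂ • Measure.dirac ((-a / 2, -(a * Real.sqrt 3) / 2) : ℝ × ℝ))
    (hlaw₁ : ∀ k, Odd k → μ.map (fun ω => (X k ω, Y k ω)) =
        ENNReal.ofReal q₁₀ • Measure.dirac ((-a, 0) : ℝ × ℝ)
      + ENNReal.ofReal q₁₁ • Measure.dirac ((a / 2, -(a * Real.sqrt 3) / 2) : ℝ × ℝ)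
      + ENNReal.ofReal q₁₂ • Measure.dirac ((a / 2, a * Real.sqrt 3 / 2) : ℝ × ℝ))
    (hind : iIndepFun
      (fun k ω => (X k ω, Y k ω)) μ)
    (aseq : ℕ → ℝ) (haseq : ∀ n, 0 < aseq n)
    (ha0 : Filter.Tendsto aseq Filter.atTop (nhds 0))
    (hainf : Filter.Tendsto (fun n : ℕ => (n : ℝ) * aseq n) Filter.atTop Filter.atTop)
    (lam₁ lam₂ : ℝ) :
    Filter.Tendsto (fun n : ℕ => aseq n *
        (Real.log (∫ ω, Real.exp
            (lam₁ * (∑ k ∈ Finset.range n, X k ω) / Real.sqrt ((n : ℝ) * aseq n)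
             + lam₂ * (∑ k ∈ Finset.range n, Y k ω) / Real.sqrt ((n : ℝ) * aseq n)) ∂μ)
          - (lam₁ * (∫ ω, (∑ k ∈ Finset.range n, X k ω) ∂μ)
             + lam₂ * (∫ ω, (∑ k ∈ Finset.range n, Y k ω) ∂μ)) / Real.sqrt ((n : ℝ) * aseq n)))
      Filter.atTop
      (nhds ((1 / 2) *
        (lam₁ ^ 2 * ((9 * a ^ 2 / 8) *
            ((q₀₁ + q₀₂) - (q₀₁ + q₀₂) ^ 2 + (q₁₁ + q₁₂) - (q₁₁ + q₁₂) ^ 2))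
         + lam₂ ^ 2 * ((3 * a ^ 2 / 8) *
            ((q₀₁ + q₀₂) - (q₀₁ - q₀₂) ^ 2 + (q₁₁ + q₁₂) - (q₁₁ - q₁₂) ^ 2))
         + 2 * lam₁ * lam₂ * ((3 * Real.sqrt 3 * a ^ 2 / 8) *
            (q₀₁ * (q₀₁ - 1) + q₀₂ * (1 - q₀₂) - q₁₁ * (1 - q₁₁) + q₁₂ * (1 - q₁₂)))))) := by

  classical
  have hr : Real.sqrt 3 ^ 2 = 3 := Real.sq_sqrt (by norm_num)
  have h00 : q₀₀ = 1 - q₀₁ - q₀₂ := by linarith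
  have h10 : q₁₀ = 1 - q₁₁ - q₁₂ := by linarith
  subst h00 h10
  -- step facts
  have hE := fun (k : ℕ) (hk : Even k) => step_facts μ (X k) (Y k) (hXm k) (hYm k)
    (1 - q₀₁ - q₀₂) q₀₁ q₀₂ hq₀₀.le hq₀₁.le hq₀₂.le
    a 0 (-a / 2) (a * Real.sqrt 3 / 2) (-a / 2) (-(a * Real.sqrt 3) / 2) (hlaw₀ k hk) lam₁ lam₂
  have hO := fun (k : ℕ) (hk : Odd k) => step_facts μ (X k) (Y k) (hXm k) (hYm k)
    (1 - q₁₁ - q₁₂) q₁₁ q₁₂ hq₁₀.le hq₁₁.le hq₁₂.le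
    (-a) 0 (a / 2) (-(a * Real.sqrt 3) / 2) (a / 2) (a * Real.sqrt 3 / 2) (hlaw₁ k hk) lam₁ lam₂
  have hZm : ∀ k : ℕ, Measurable (fun ω => lam₁ * X k ω + lam₂ * Y k ω) :=
    fun k => ((hXm k).const_mul lam₁).add ((hYm k).const_mul lam₂)
  have hindZ : iIndepFun
      (fun k ω => lam₁ * X k ω + lam₂ * Y k ω) μ := by
    have h := hind.comp (fun _ (p : ℝ × ℝ) => lam₁ * p.1 + lam₂ * p.2) (fun _ => by fun_prop)
    exact h
  have hG0pos : ∀ t : ℝ, 0 < ((1 - q₀₁ - q₀₂) * Real.exp (t * (lam₁ * a + lam₂ * 0)) + q₀₁ * Real.exp (t * (lam₁ * (-a / 2) + lam₂ * (a * Real.sqrt 3 / 2))) + q₀₂ * Real.exp (t * (lam₁ * (-a / 2) + lam₂ * (-(a * Real.sqrt 3) / 2)))) := fun t => by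
    have e1 := Real.exp_pos (t * (lam₁ * a + lam₂ * 0))
    have e2 := Real.exp_pos (t * (lam₁ * (-a / 2) + lam₂ * (a * Real.sqrt 3 / 2)))
    have e3 := Real.exp_pos (t * (lam₁ * (-a / 2) + lam₂ * (-(a * Real.sqrt 3) / 2)))
    nlinarith [mul_pos hq₀₀ e1, mul_pos hq₀₁ e2, mul_pos hq₀₂ e3]
  have hG1pos : ∀ t : ℝ, 0 < ((1 - q₁₁ - q₁₂) * Real.exp (t * (lam₁ * (-a) + lam₂ * 0)) + q₁₁ * Real.exp (t * (lam₁ * (a / 2) + lam₂ * (-(a * Real.sqrt 3) / 2))) + q₁₂ * Real.exp (t * (lam₁ * (a / 2) + lam₂ * (a * Real.sqrt 3 / 2)))) := fun t => by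
    have e1 := Real.exp_pos (t * (lam₁ * (-a) + lam₂ * 0))
    have e2 := Real.exp_pos (t * (lam₁ * (a / 2) + lam₂ * (-(a * Real.sqrt 3) / 2)))
    have e3 := Real.exp_pos (t * (lam₁ * (a / 2) + lam₂ * (a * Real.sqrt 3 / 2)))
    nlinarith [mul_pos hq₁₀ e1, mul_pos hq₁₁ e2, mul_pos hq₁₂ e3]
  have hXint : ∀ k : ℕ, Integrable (X k) μ := fun k => by
    rcases Nat.even_or_odd k with hk | hk
    · exact (hE k hk).2.1
    · exact (hO k hk).2.1
  have hYint : ∀ k : ℕ, Integrable (Y k) μ := fun k => by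
    rcases Nat.even_or_odd k with hk | hk
    · exact (hE k hk).2.2.2.1
    · exact (hO k hk).2.2.2.1
  have hXval : ∀ k : ℕ, (∫ ω, X k ω ∂μ) = if Even k then ((1 - q₀₁ - q₀₂) * a + q₀₁ * (-a / 2) + q₀₂ * (-a / 2)) else ((1 - q₁₁ - q₁₂) * (-a) + q₁₁ * (a / 2) + q₁₂ * (a / 2)) := fun k => by
    by_cases hk : Even k
    · rw [if_pos hk]; exact (hE k hk).2.2.1
    · rw [if_neg hk]; exact (hO k (Nat.odd_iff.mpr (by rw [Nat.even_iff] at hk; omega))).2.2.1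
  have hYval : ∀ k : ℕ, (∫ ω, Y k ω ∂μ) = if Even k then ((1 - q₀₁ - q₀₂) * 0 + q₀₁ * (a * Real.sqrt 3 / 2) + q₀₂ * (-(a * Real.sqrt 3) / 2)) else ((1 - q₁₁ - q₁₂) * 0 + q₁₁ * (-(a * Real.sqrt 3) / 2) + q₁₂ * (a * Real.sqrt 3 / 2)) := fun k => by
    by_cases hk : Even k
    · rw [if_pos hk]; exact (hE k hk).2.2.2.2
    · rw [if_neg hk]; exact (hO k (Nat.odd_iff.mpr (by rw [Nat.even_iff] at hk; omega))).2.2.2.2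
  have hsumX : ∀ n : ℕ, (∫ ω, (∑ k ∈ Finset.range n, X k ω) ∂μ)
      = ((Finset.filter (fun k => Even k) (Finset.range n)).card : ℝ) * ((1 - q₀₁ - q₀₂) * a + q₀₁ * (-a / 2) + q₀₂ * (-a / 2)) + ((Finset.filter (fun k => ¬ Even k) (Finset.range n)).card : ℝ) * ((1 - q₁₁ - q₁₂) * (-a) + q₁₁ * (a / 2) + q₁₂ * (a / 2)) := by
    intro n
    rw [integral_finset_sum _ (fun k _ => hXint k),
      Finset.sum_congr rfl (fun k _ => hXval k), Finset.sum_ite, Finset.sum_const,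
      Finset.sum_const, nsmul_eq_mul, nsmul_eq_mul]
  have hsumY : ∀ n : ℕ, (∫ ω, (∑ k ∈ Finset.range n, Y k ω) ∂μ)
      = ((Finset.filter (fun k => Even k) (Finset.range n)).card : ℝ) * ((1 - q₀₁ - q₀₂) * 0 + q₀₁ * (a * Real.sqrt 3 / 2) + q₀₂ * (-(a * Real.sqrt 3) / 2)) + ((Finset.filter (fun k => ¬ Even k) (Finset.range n)).card : ℝ) * ((1 - q₁₁ - q₁₂) * 0 + q₁₁ * (-(a * Real.sqrt 3) / 2) + q₁₂ * (a * Real.sqrt 3 / 2)) := by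
    intro n
    rw [integral_finset_sum _ (fun k _ => hYint k),
      Finset.sum_congr rfl (fun k _ => hYval k), Finset.sum_ite, Finset.sum_const,
      Finset.sum_const, nsmul_eq_mul, nsmul_eq_mul]
  have hprod : ∀ (n : ℕ) (t : ℝ),
      (∫ ω, Real.exp (t * ∑ k ∈ Finset.range n, (lam₁ * X k ω + lam₂ * Y k ω)) ∂μ)
      = ((1 - q₀₁ - q₀₂) * Real.exp (t * (lam₁ * a + lam₂ * 0)) + q₀₁ * Real.exp (t * (lam₁ * (-a / 2) + lam₂ * (a * Real.sqrt 3 / 2))) + q₀₂ * Real.exp (t * (lam₁ * (-a / 2) + lam₂ * (-(a * Real.sqrt 3) / 2)))) ^ (Finset.filter (fun k => Even k) (Finset.range n)).card * ((1 - q₁₁ - q₁₂) * Real.exp (t * (lam₁ * (-a) + lam₂ * 0)) + q₁₁ * Real.exp (t * (lam₁ * (a / 2) + lam₂ * (-(a * Real.sqrt 3) / 2))) + q₁₂ * Real.exp (t * (lam₁ * (a / 2) + lam₂ * (a * Real.sqrt 3 / 2)))) ^ (Finset.filter (fun k => ¬ Even k) (Finset.range n)).card := by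
    intro n t
    have hfun : (∑ k ∈ Finset.range n, fun ω : Ω => lam₁ * X k ω + lam₂ * Y k ω)
        = (fun ω : Ω => ∑ k ∈ Finset.range n, (lam₁ * X k ω + lam₂ * Y k ω)) := by
      funext ω
      exact Finset.sum_apply ω (Finset.range n) _
    have h1 := hindZ.mgf_sum hZm (Finset.range n) (t := t)
    rw [hfun] at h1
    rw [show (∫ ω, Real.exp (t * ∑ k ∈ Finset.range n, (lam₁ * X k ω + lam₂ * Y k ω)) ∂μ)
        = mgf (fun ω : Ω => ∑ k ∈ Finset.range n, (lam₁ * X k ω + lam₂ * Y k ω)) μ t from rfl, h1]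
    have h2 : ∀ k ∈ Finset.range n, mgf (fun ω => lam₁ * X k ω + lam₂ * Y k ω) μ t
        = if Even k then ((1 - q₀₁ - q₀₂) * Real.exp (t * (lam₁ * a + lam₂ * 0)) + q₀₁ * Real.exp (t * (lam₁ * (-a / 2) + lam₂ * (a * Real.sqrt 3 / 2))) + q₀₂ * Real.exp (t * (lam₁ * (-a / 2) + lam₂ * (-(a * Real.sqrt 3) / 2)))) else ((1 - q₁₁ - q₁₂) * Real.exp (t * (lam₁ * (-a) + lam₂ * 0)) + q₁₁ * Real.exp (t * (lam₁ * (a / 2) + lam₂ * (-(a * Real.sqrt 3) / 2))) + q₁₂ * Real.exp (t * (lam₁ * (a / 2) + lam₂ * (a * Real.sqrt 3 / 2)))) := by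
      intro k _
      by_cases hk : Even k
      · rw [if_pos hk]; exact (hE k hk).1 t
      · rw [if_neg hk]; exact (hO k (Nat.odd_iff.mpr (by rw [Nat.even_iff] at hk; omega))).1 t
    rw [Finset.prod_congr rfl h2, Finset.prod_ite, Finset.prod_const, Finset.prod_const]
  -- ratio limits
  have hN0 : Filter.Tendsto (fun n : ℕ => (((Finset.filter (fun k => Even k) (Finset.range n)).card : ℕ) : ℝ) / (n : ℝ)) Filter.atTop
      (nhds (1 / 2)) := by
    apply ratio_tendsto_half
    · intro n
      rw [card_even_range]
      have h : (n : ℕ) ≤ 2 * ((n + 1) / 2) := by omega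
      have h' : ((n : ℕ) : ℝ) ≤ ((2 * ((n + 1) / 2) : ℕ) : ℝ) := Nat.cast_le.mpr h
      push_cast at h' ⊢
      linarith
    · intro n
      have h : 2 * ((n + 1) / 2) ≤ n + 1 := by omega
      have h' : ((2 * ((n + 1) / 2) : ℕ) : ℝ) ≤ ((n + 1 : ℕ) : ℝ) := Nat.cast_le.mpr h
      rw [card_even_range]
      push_cast at h' ⊢
      linarith
  have hN1 : Filter.Tendsto (fun n : ℕ => (((Finset.filter (fun k => ¬ Even k) (Finset.range n)).card : ℕ) : ℝ) / (n : ℝ)) Filter.atTop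
      (nhds (1 / 2)) := by
    apply ratio_tendsto_half
    · intro n
      rw [card_odd_range]
      have h : (n : ℕ) - 1 ≤ 2 * (n / 2) := by omega
      have h2 : (n : ℕ) ≤ 2 * (n / 2) + 1 := by omega
      have h' : ((n : ℕ) : ℝ) ≤ ((2 * (n / 2) + 1 : ℕ) : ℝ) := Nat.cast_le.mpr h2
      push_cast at h' ⊢
      linarith
    · intro n
      have h : 2 * (n / 2) ≤ n := by omega
      have h' : ((2 * (n / 2) : ℕ) : ℝ) ≤ ((n : ℕ) : ℝ) := Nat.cast_le.mpr h
      rw [card_odd_range]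
      push_cast at h' ⊢
      linarith
  -- t_n tendsto
  have hts : Filter.Tendsto (fun n : ℕ => (Real.sqrt ((n : ℝ) * aseq n))⁻¹) Filter.atTop
      (nhdsWithin 0 {0}ᶜ) := by
    rw [tendsto_nhdsWithin_iff]
    constructor
    · exact sqrt_inv_tendsto hainf
    · filter_upwards [hainf.eventually_gt_atTop 0] with n hna
      simp only [Set.mem_compl_iff, Set.mem_singleton_iff]
      exact inv_ne_zero (by positivity)
  have hk0 := (key3 (1 - q₀₁ - q₀₂) q₀₁ q₀₂ (lam₁ * a + lam₂ * 0) (lam₁ * (-a / 2) + lam₂ * (a * Real.sqrt 3 / 2)) (lam₁ * (-a / 2) + lam₂ * (-(a * Real.sqrt 3) / 2)) hq₀₀ hq₀₁ hq₀₂ (by ring)).comp hts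
  have hk1 := (key3 (1 - q₁₁ - q₁₂) q₁₁ q₁₂ (lam₁ * (-a) + lam₂ * 0) (lam₁ * (a / 2) + lam₂ * (-(a * Real.sqrt 3) / 2)) (lam₁ * (a / 2) + lam₂ * (a * Real.sqrt 3 / 2)) hq₁₀ hq₁₁ hq₁₂ (by ring)).comp hts
  have htendsto : Filter.Tendsto (fun n : ℕ => ((((Finset.filter (fun k => Even k) (Finset.range n)).card : ℝ) / (n : ℝ)) * ((Real.log ((1 - q₀₁ - q₀₂) * Real.exp ((Real.sqrt ((n : ℝ) * aseq n))⁻¹ * (lam₁ * a + lam₂ * 0)) + q₀₁ * Real.exp ((Real.sqrt ((n : ℝ) * aseq n))⁻¹ * (lam₁ * (-a / 2) + lam₂ * (a * Real.sqrt 3 / 2))) + q₀₂ * Real.exp ((Real.sqrt ((n : ℝ) * aseq n))⁻¹ * (lam₁ * (-a / 2) + lam₂ * (-(a * Real.sqrt 3) / 2)))) - (Real.sqrt ((n : ℝ) * aseq n))⁻¹ * ((1 - q₀₁ - q₀₂) * (lam₁ * a + lam₂ * 0) + q₀₁ * (lam₁ * (-a / 2) + lam₂ * (a * Real.sqrt 3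 / 2)) + q₀₂ * (lam₁ * (-a / 2) + lam₂ * (-(a * Real.sqrt 3) / 2)))) / (Real.sqrt ((n : ℝ) * aseq n))⁻¹ ^ 2) + (((Finset.filter (fun k => ¬ Even k) (Finset.range n)).card : ℝ) / (n : ℝ)) * ((Real.log ((1 - q₁₁ - q₁₂) * Real.exp ((Real.sqrt ((n : ℝ) * aseq n))⁻¹ * (lam₁ * (-a) + lam₂ * 0)) + q₁₁ * Real.exp ((Real.sqrt ((n : ℝ) * aseq n))⁻¹ * (lam₁ * (a / 2) + lam₂ * (-(a * Real.sqrt 3) / 2))) + q₁₂ * Real.exp ((Real.sqrt ((n : ℝ) * aseq n))⁻¹ * (lam₁ * (a / 2) + lam₂ * (a * Real.sqrt 3 / 2)))) - (Real.sqrt ((n : ℝ) * aseq n))⁻¹ * ((1 - q₁₁ - q₁₂) * (lam₁ * (-a) + lam₂ * 0) + q₁₁ * (lam₁ * (a / 2) + lam₂ * (-(a * Real.sqrt 3) / 2)) + q₁₂ * (lam₁ * (a / 2) + lam₂ * (a * Real.sqrt 3 / 2)))) / (Real.sqrt ((n : ℝ) * aseq n))⁻¹ ^ 2))) Filter.atT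op
      (nhds (1 / 2 * (((1 - q₀₁ - q₀₂) * (lam₁ * a + lam₂ * 0) ^ 2 + q₀₁ * (lam₁ * (-a / 2) + lam₂ * (a * Real.sqrt 3 / 2)) ^ 2 + q₀₂ * (lam₁ * (-a / 2) + lam₂ * (-(a * Real.sqrt 3) / 2)) ^ 2 - ((1 - q₀₁ - q₀₂) * (lam₁ * a + lam₂ * 0) + q₀₁ * (lam₁ * (-a / 2) + lam₂ * (a * Real.sqrt 3 / 2)) + q₀₂ * (lam₁ * (-a / 2) + lam₂ * (-(a * Real.sqrt 3) / 2))) ^ 2) / 2) + 1 / 2 * (((1 - q₁₁ - q₁₂) * (lam₁ * (-a) + lam₂ * 0) ^ 2 + q₁₁ * (lam₁ * (a / 2) + lam₂ * (-(a * Real.sqrt 3) / 2)) ^ 2 + q₁₂ * (lam₁ * (a / 2) + lam₂ * (a * Real.sqrt 3 / 2)) ^ 2 - ((1 - q₁₁ - q₁₂) * (lam₁ * (-a) + lam₂ * 0) + q₁₁ * (lam₁ * (a / 2) + lam₂ * (-(a * Real.sqrt 3) / 2)) + q₁₂ * (lam₁ * (a / 2) + lam₂ * (a * Real.sqrt 3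 / 2))) ^ 2) / 2))) := (hN0.mul hk0).add (hN1.mul hk1)
  have hkey : (fun n : ℕ => ((((Finset.filter (fun k => Even k) (Finset.range n)).card : ℝ) / (n : ℝ)) * ((Real.log ((1 - q₀₁ - q₀₂) * Real.exp ((Real.sqrt ((n : ℝ) * aseq n))⁻¹ * (lam₁ * a + lam₂ * 0)) + q₀₁ * Real.exp ((Real.sqrt ((n : ℝ) * aseq n))⁻¹ * (lam₁ * (-a / 2) + lam₂ * (a * Real.sqrt 3 / 2))) + q₀₂ * Real.exp ((Real.sqrt ((n : ℝ) * aseq n))⁻¹ * (lam₁ * (-a / 2) + lam₂ * (-(a * Real.sqrt 3) / 2)))) - (Real.sqrt ((n : ℝ) * aseq n))⁻¹ * ((1 - q₀₁ - q₀₂) * (lam₁ * a + lam₂ * 0) + q₀₁ * (lam₁ * (-a / 2) + lam₂ * (a * Real.sqrt 3 / 2)) + q₀₂ * (lam₁ * (-a / 2) + lam₂ * (-(a * Real.sqrt 3) / 2)))) / (Real.sqrt ((n : ℝ) * aseq n))⁻¹ ^ 2) + (((Finset.filter (fun k => ¬ Even k) (Finset.range n)).card : ℝ) / (n : ℝ))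 * ((Real.log ((1 - q₁₁ - q₁₂) * Real.exp ((Real.sqrt ((n : ℝ) * aseq n))⁻¹ * (lam₁ * (-a) + lam₂ * 0)) + q₁₁ * Real.exp ((Real.sqrt ((n : ℝ) * aseq n))⁻¹ * (lam₁ * (a / 2) + lam₂ * (-(a * Real.sqrt 3) / 2))) + q₁₂ * Real.exp ((Real.sqrt ((n : ℝ) * aseq n))⁻¹ * (lam₁ * (a / 2) + lam₂ * (a * Real.sqrt 3 / 2)))) - (Real.sqrt ((n : ℝ) * aseq n))⁻¹ * ((1 - q₁₁ - q₁₂) * (lam₁ * (-a) + lam₂ * 0) + q₁₁ * (lam₁ * (a / 2) + lam₂ * (-(a * Real.sqrt 3) / 2)) + q₁₂ * (lam₁ * (a / 2) + lam₂ * (a * Real.sqrt 3 / 2)))) / (Real.sqrt ((n : ℝ) * aseq n))⁻¹ ^ 2))) =ᶠ[Filter.atTop] (fun n : ℕ => aseq n *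
        (Real.log (∫ ω, Real.exp
            (lam₁ * (∑ k ∈ Finset.range n, X k ω) / Real.sqrt ((n : ℝ) * aseq n)
             + lam₂ * (∑ k ∈ Finset.range n, Y k ω) / Real.sqrt ((n : ℝ) * aseq n)) ∂μ)
          - (lam₁ * (∫ ω, (∑ k ∈ Finset.range n, X k ω) ∂μ)
             + lam₂ * (∫ ω, (∑ k ∈ Finset.range n, Y k ω) ∂μ)) / Real.sqrt ((n : ℝ) * aseq n))) := by
    filter_upwards [Filter.eventually_ge_atTop 1] with n hn
    symm
    have hnpos : (0 : ℝ) < (n : ℝ) := by exact_mod_cast hn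
    have hna : (0 : ℝ) < (n : ℝ) * aseq n := mul_pos hnpos (haseq n)
    have hsp : (0 : ℝ) < Real.sqrt ((n : ℝ) * aseq n) := Real.sqrt_pos.mpr hna
    have hs2 : Real.sqrt ((n : ℝ) * aseq n) ^ 2 = (n : ℝ) * aseq n := Real.sq_sqrt hna.le
    have harg : (fun ω => Real.exp
            (lam₁ * (∑ k ∈ Finset.range n, X k ω) / Real.sqrt ((n : ℝ) * aseq n)
             + lam₂ * (∑ k ∈ Finset.range n, Y k ω) / Real.sqrt ((n : ℝ) * aseq n)))
        = fun ω => Real.exp ((Real.sqrt ((n : ℝ) * aseq n))⁻¹ * ∑ k ∈ Finset.range n, (lam₁ * X k ω + lam₂ * Y k ω)) := by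
      funext ω
      congr 1
      rw [Finset.sum_add_distrib, ← Finset.mul_sum, ← Finset.mul_sum]
      field_simp
    rw [harg, hprod n (Real.sqrt ((n : ℝ) * aseq n))⁻¹, hsumX n, hsumY n,
      Real.log_mul (pow_ne_zero _ (hG0pos _).ne') (pow_ne_zero _ (hG1pos _).ne'),
      Real.log_pow, Real.log_pow]
    have ha' : aseq n = Real.sqrt ((n : ℝ) * aseq n) ^ 2 / (n : ℝ) := by
      rw [hs2, mul_comm, mul_div_assoc, div_self hnpos.ne', mul_one]
    apply assemble
    · exact hsp.ne'
    · exact hnpos.ne'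
    · exact ha'
    · ring
    · ring
  have hconst : ((1 : ℝ) / 2) *
        (lam₁ ^ 2 * ((9 * a ^ 2 / 8) *
            ((q₀₁ + q₀₂) - (q₀₁ + q₀₂) ^ 2 + (q₁₁ + q₁₂) - (q₁₁ + q₁₂) ^ 2))
         + lam₂ ^ 2 * ((3 * a ^ 2 / 8) *
            ((q₀₁ + q₀₂) - (q₀₁ - q₀₂) ^ 2 + (q₁₁ + q₁₂) - (q₁₁ - q₁₂) ^ 2))
         + 2 * lam₁ * lam₂ * ((3 * Real.sqrt 3 * a ^ 2 / 8) *
            (q₀₁ * (q₀₁ - 1) + q₀₂ * (1 - q₀₂) - q₁₁ * (1 - q₁₁) + q₁₂ * (1 - q₁₂))))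
      = 1 / 2 * (((1 - q₀₁ - q₀₂) * (lam₁ * a + lam₂ * 0) ^ 2 + q₀₁ * (lam₁ * (-a / 2) + lam₂ * (a * Real.sqrt 3 / 2)) ^ 2 + q₀₂ * (lam₁ * (-a / 2) + lam₂ * (-(a * Real.sqrt 3) / 2)) ^ 2 - ((1 - q₀₁ - q₀₂) * (lam₁ * a + lam₂ * 0) + q₀₁ * (lam₁ * (-a / 2) + lam₂ * (a * Real.sqrt 3 / 2)) + q₀₂ * (lam₁ * (-a / 2) + lam₂ * (-(a * Real.sqrt 3) / 2))) ^ 2) / 2) + 1 / 2 * (((1 - q₁₁ - q₁₂) * (lam₁ * (-a) + lam₂ * 0) ^ 2 + q₁₁ * (lam₁ * (a / 2) + lam₂ * (-(a * Real.sqrt 3) / 2)) ^ 2 + q₁₂ * (lam₁ * (a / 2) + lam₂ * (a * Real.sqrt 3 / 2)) ^ 2 - ((1 - q₁₁ - q₁₂) * (lam₁ * (-a) + lam₂ * 0) + q₁₁ * (lam₁ * (a / 2) + lam₂ * (-(a * Real.sqrt 3) / 2)) + q₁₂ * (lam₁ * (a / 2) + lam₂ * (a * Real.sqrt 3 / 2)))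 ^ 2) / 2) := by
    linear_combination (a ^ 2 * lam₂ ^ 2 / 16) *
      (q₀₁ ^ 2 - q₀₁ - 2 * q₀₁ * q₀₂ + q₀₂ ^ 2 - q₀₂
       + q₁₁ ^ 2 - q₁₁ - 2 * q₁₁ * q₁₂ + q₁₂ ^ 2 - q₁₂) * hr
  rw [hconst]
  exact Filter.Tendsto.congr' hkey htendsto
end
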